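/- The map ψ : R^4 → R^4 given by ψ(x1, x2, y1, y2) = (1/√2)·(x1 − y2, −x1 − y2, x2 + y1, x2 − y1) is orthogonal (preserves the Euclidean inner product), preserves the Liouville form λ0 = (1/2)·(y1 dx1 − x1 dy1 + y2 dx2 − x2 dy2), and satisfies ψ ∘ ĝ = g ∘ ψ, where ĝ(w1, w2) = (e^{2πi/3} w1, e^{2πi/3} w2) in coordinates w1 = x1 + i x2, w2 = y1 + i y2, and g(z1, z2) = (e^{2πi/3} z1, e^{4πi/3} z2) in coordinates z1 = x1 + i y1, z2 = x2 + i y2. -/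
import Mathlib


open Real

/-- The linear map ψ on ℝ⁴ with coordinates (x1, x2, y1, y2). -/
noncomputable def psiMap : ℝ × ℝ × ℝ × ℝ → ℝ × ℝ × ℝ × ℝ :=
  fun v =>
    let x1 := v.1; let x2 := v.2.1; let y1 := v.2.2.1; let y2 := v.2.2.2
    ((1 / Real.sqrt 2) * (x1 - y2), (1 / Real.sqrt 2) * (-x1 - y2),
     (1 / Real.sqrt 2) * (x2 + y1), (1 / Real.sqrt 2) * (x2 - y1))

/-- The action ĝ = ĝ_{3,1}: multiplication by e^{2πi/3} on w1 = x1 + i x2 and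
    on w2 = y1 + i y2. -/
noncomputable def gHat : ℝ × ℝ × ℝ × ℝ → ℝ × ℝ × ℝ × ℝ :=
  fun v =>
    let x1 := v.1; let x2 := v.2.1; let y1 := v.2.2.1; let y2 := v.2.2.2
    let c := Real.cos (2 * π / 3); let s := Real.sin (2 * π / 3)
    (c * x1 - s * x2, s * x1 + c * x2, c * y1 - s * y2, s * y1 + c * y2)

/-- The action g = g_{3,2}: multiplication by e^{2πi/3} on z1 = x1 + i y1 and
    by e^{4πi/3} on z2 = x2 + i y2. -/
noncomputable def gStd : ℝ × ℝ × ℝ × ℝ → ℝ × ℝ × ℝ × ℝ :=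
  fun v =>
    let x1 := v.1; let x2 := v.2.1; let y1 := v.2.2.1; let y2 := v.2.2.2
    let c := Real.cos (2 * π / 3); let s := Real.sin (2 * π / 3)
    let c' := Real.cos (4 * π / 3); let s' := Real.sin (4 * π / 3)
    (c * x1 - s * y1, c' * x2 - s' * y2, s * x1 + c * y1, s' * x2 + c' * y2)

/-- The standard Euclidean inner product on ℝ⁴. -/
noncomputable def dot4 (v w : ℝ × ℝ × ℝ × ℝ) : ℝ :=
  v.1 * w.1 + v.2.1 * w.2.1 + v.2.2.1 * w.2.2.1 + v.2.2.2 * w.2.2.2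

/-- The Liouville form λ0 = (1/2)(y1 dx1 − x1 dy1 + y2 dx2 − x2 dy2),
    evaluated at the point v on the tangent vector u
    (coordinates ordered (x1, x2, y1, y2)). -/
noncomputable def liouville (v u : ℝ × ℝ × ℝ × ℝ) : ℝ :=
  (1 / 2) * (v.2.2.1 * u.1 - v.1 * u.2.2.1 + v.2.2.2 * u.2.1 - v.2.1 * u.2.2.2)

theorem stmt_17 :
    (∀ v w : ℝ × ℝ × ℝ × ℝ, dot4 (psiMap v) (psiMap w) = dot4 v w)
    ∧ (∀ v u : ℝ × ℝ × ℝ × ℝ, liouville (psiMap v) (psiMap u) = liouville v u)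
    ∧ (∀ v : ℝ × ℝ × ℝ × ℝ, psiMap (gHat v) = gStd (psiMap v)) := by
  have h2 : Real.sqrt 2 * Real.sqrt 2 = 2 := Real.mul_self_sqrt (by norm_num)
  have key : (1 / Real.sqrt 2) * (1 / Real.sqrt 2) = 1 / 2 := by
    rw [div_mul_div_comm, one_mul, h2]
  have hm : ∀ a b : ℝ, (1 / Real.sqrt 2 * a) * (1 / Real.sqrt 2 * b) = a * b / 2 := by
    intro a b
    calc (1 / Real.sqrt 2 * a) * (1 / Real.sqrt 2 * b)
        = ((1 / Real.sqrt 2) * (1 / Real.sqrt 2)) * (a * b) := by ring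
      _ = a * b / 2 := by rw [key]; ring
  have hc : Real.cos (2 * π / 3) = -(1 / 2) := by
    rw [show (2 * π / 3 : ℝ) = π - π / 3 by ring, Real.cos_pi_sub, Real.cos_pi_div_three]
  have hs : Real.sin (2 * π / 3) = Real.sqrt 3 / 2 := by
    rw [show (2 * π / 3 : ℝ) = π - π / 3 by ring, Real.sin_pi_sub, Real.sin_pi_div_three]
  have hc' : Real.cos (4 * π / 3) = -(1 / 2) := by
    rw [show (4 * π / 3 : ℝ) = π + π / 3 by ring, Real.cos_add]
    simp [Real.cos_pi_div_three]
  have hs' : Real.sin (4 * π / 3) = -(Real.sqrt 3 / 2) := by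
    rw [show (4 * π / 3 : ℝ) = π + π / 3 by ring, Real.sin_add]
    simp [Real.sin_pi_div_three]
  refine ⟨fun v w => ?_, fun v u => ?_, fun v => ?_⟩
  · simp only [psiMap, dot4, hm]; ring
  · simp only [psiMap, liouville, hm]; ring
  · simp only [psiMap, gHat, gStd, hc, hs, hc', hs', Prod.mk.injEq]
    refine ⟨by ring, by ring, by ring, by ring⟩
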